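/- arXiv:2203.16656 — 2 statements merged into one kernel-verified Lean document; each statement's English description precedes it below -/
import Mathlib

section
/- Let Λ > 0 and let p(r) = (Λ/3)r⁴ − r² + 2mr − Q² with m, Q ∈ ℝ. Then p has exactly three distinct positive real roots and exactly one negative real root if and only if 0 < Q² < 1/(4Λ) and ((2 + √(1 − 4ΛQ²))/(3√(2Λ)))·√(1 − √(1 − 4ΛQ²)) < m < ((2 − √(1 − 4ΛQ²))/(3√(2Λ)))·√(1 + √(1 − 4ΛQ²)). -/
noncomputable def rndsM (Λ Q r : ℝ) : ℝ := Q^2/(2*r) + r/2 - Λ/6*r^3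

lemma rnds_factor (Λ m Q r : ℝ) (hr : r ≠ 0) :
    Λ/3*r^4 - r^2 + 2*m*r - Q^2 = 2*r*(m - rndsM Λ Q r) := by
  unfold rndsM; field_simp; ring

lemma rnds_root_iff (Λ m Q r : ℝ) (hr : 0 < r) :
    Λ/3*r^4 - r^2 + 2*m*r - Q^2 = 0 ↔ rndsM Λ Q r = m := by
  rw [rnds_factor Λ m Q r hr.ne', mul_eq_zero, sub_eq_zero]
  constructor
  · rintro (h | h)
    · linarith
    · exact h.symm
  · intro h; right; exact h.symm

lemma rndsM_diff (Λ Q s t : ℝ) (hs : s ≠ 0) (ht : t ≠ 0) :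
    rndsM Λ Q s - rndsM Λ Q t
      = (s - t)/(2*s*t) * (s*t - Q^2 - Λ/3*(s*t)*(s^2+s*t+t^2)) := by
  unfold rndsM; field_simp; ring

lemma rndsM_lt_of_F_pos (Λ Q s t : ℝ) (hs : 0 < s) (hst : s < t)
    (hF : 0 < s*t - Q^2 - Λ/3*(s*t)*(s^2+s*t+t^2)) : rndsM Λ Q s < rndsM Λ Q t := by
  have ht0 : 0 < t := hs.trans hst
  have h := rndsM_diff Λ Q s t hs.ne' ht0.ne'
  have h1 : (s - t)/(2*s*t) < 0 := div_neg_of_neg_of_pos (by linarith) (by positivity)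
  nlinarith [mul_pos_of_neg_of_neg h1 (neg_neg_iff_pos.2 hF)]

lemma rndsM_gt_of_F_neg (Λ Q s t : ℝ) (hs : 0 < s) (hst : s < t)
    (hF : s*t - Q^2 - Λ/3*(s*t)*(s^2+s*t+t^2) < 0) : rndsM Λ Q t < rndsM Λ Q s := by
  have ht0 : 0 < t := hs.trans hst
  have h := rndsM_diff Λ Q s t hs.ne' ht0.ne'
  have h1 : (s - t)/(2*s*t) < 0 := div_neg_of_neg_of_pos (by linarith) (by positivity)
  nlinarith [mul_pos_of_neg_of_neg h1 hF]

lemma rnds_sq_pos (s t : ℝ) (hst : s < t) : 0 < (s-t)^2 := by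
  rw [show (s-t)^2 = (t-s)^2 by ring]; exact pow_pos (by linarith) 2

lemma rnds_F_neg_left (Λ Q s t x : ℝ) (hΛ : 0 < Λ) (hs : 0 < s) (hst : s < t)
    (ht : t^2 ≤ x) (hroot : Λ*x^2 - x + Q^2 = 0) (hx : 2*Λ*x < 1) :
    s*t - Q^2 - Λ/3*(s*t)*(s^2+s*t+t^2) < 0 := by
  have ht0 : 0 < t := hs.trans hst
  have hw0 : 0 < s*t := mul_pos hs ht0
  have hw : s*t < x := by nlinarith
  have h1 : 0 < x - s*t := by linarith
  have h2 : 0 < 1 - Λ*(s*t+x) := by nlinarith [mul_lt_mul_of_pos_left hw hΛ]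
  have hg : 0 < Λ*(s*t)^2 - s*t + Q^2 := by nlinarith [mul_pos h1 h2]
  have h3 : 0 < Λ/3*(s*t)*((s-t)^2) :=
    mul_pos (mul_pos (by positivity) hw0) (rnds_sq_pos s t hst)
  nlinarith [hg, h3]

lemma rnds_F_neg_right (Λ Q s t x : ℝ) (hΛ : 0 < Λ) (hs : 0 < s) (hst : s < t)
    (hsx : x ≤ s^2) (hroot : Λ*x^2 - x + Q^2 = 0) (hx : 1 < 2*Λ*x) :
    s*t - Q^2 - Λ/3*(s*t)*(s^2+s*t+t^2) < 0 := by
  have ht0 : 0 < t := hs.trans hst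
  have hw0 : 0 < s*t := mul_pos hs ht0
  have hw : x < s*t := by nlinarith
  have h1 : 0 < s*t - x := by linarith
  have h2 : 0 < Λ*(s*t+x) - 1 := by nlinarith [mul_lt_mul_of_pos_left hw hΛ]
  have hg : 0 < Λ*(s*t)^2 - s*t + Q^2 := by nlinarith [mul_pos h1 h2]
  have h3 : 0 < Λ/3*(s*t)*((s-t)^2) :=
    mul_pos (mul_pos (by positivity) hw0) (rnds_sq_pos s t hst)
  nlinarith [hg, h3]

lemma rnds_F_neg_all (Λ Q s t : ℝ) (hΛ : 0 < Λ) (hs : 0 < s) (hst : s < t)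
    (hD : 1 ≤ 4*Λ*Q^2) :
    s*t - Q^2 - Λ/3*(s*t)*(s^2+s*t+t^2) < 0 := by
  have ht0 : 0 < t := hs.trans hst
  have hw0 : 0 < s*t := mul_pos hs ht0
  have h3 : 0 < Λ/3*(s*t)*((s-t)^2) :=
    mul_pos (mul_pos (by positivity) hw0) (rnds_sq_pos s t hst)
  nlinarith [sq_nonneg (2*Λ*(s*t) - 1), h3]

lemma rnds_F_pos_mid (Λ Q s t x₁ x₂ : ℝ) (hΛ : 0 < Λ) (hs : 0 < s) (hst : s < t)
    (hs2 : x₁ ≤ s^2) (ht2 : t^2 ≤ x₂)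
    (hsum : Λ*(x₁+x₂) = 1) (hprod : Λ*(x₁*x₂) = Q^2) :
    0 < s*t - Q^2 - Λ/3*(s*t)*(s^2+s*t+t^2) := by
  have ht0 : 0 < t := hs.trans hst
  have hs2' : s^2 ≤ x₂ := by nlinarith
  have ht2' : x₁ ≤ t^2 := by nlinarith
  have hgs : Λ*(s^2)^2 - s^2 + Q^2 ≤ 0 := by
    nlinarith [mul_nonneg (sub_nonneg.2 hs2) (sub_nonneg.2 hs2')]
  have hgt : Λ*(t^2)^2 - t^2 + Q^2 ≤ 0 := by
    nlinarith [mul_nonneg (sub_nonneg.2 ht2') (sub_nonneg.2 ht2)]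
  have hA : 0 ≤ t*(s^2 - Λ*(s^2)^2 - Q^2) := mul_nonneg ht0.le (by linarith)
  have hB : 0 ≤ s*(t^2 - Λ*(t^2)^2 - Q^2) := mul_nonneg hs.le (by linarith)
  have hw0 : 0 < s*t := mul_pos hs ht0
  have hc : 0 < 2*Λ*(s*t)*(s+t)*(s-t)^2 :=
    mul_pos (mul_pos (mul_pos (by positivity) hw0) (by linarith)) (rnds_sq_pos s t hst)
  have key : (s+t)*(3*(s*t - Q^2 - Λ/3*(s*t)*(s^2+s*t+t^2)))
      = 3*(t*(s^2 - Λ*(s^2)^2 - Q^2) + s*(t^2 - Λ*(t^2)^2 - Q^2))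
        + 2*Λ*(s*t)*(s+t)*(s-t)^2 := by ring
  nlinarith [key, hA, hB, hc, add_pos hs ht0]

lemma rndsM_val (Λ Q d e u : ℝ) (hu : u^2 = 2*Λ) (hu0 : 0 < u)
    (he : e^2 = 1 - d) (he0 : 0 < e) (hQd : 4*Λ*Q^2 = 1 - d^2) :
    rndsM Λ Q (e/u) = (2+d)/(3*u)*e := by
  have hd : d = 1 - e^2 := by linarith
  subst hd
  have hL : Λ = u^2/2 := by linarith
  subst hL
  have hQe : Q^2 = (e^2*(2-e^2))/(2*u^2) := by
    field_simp at hQd ⊢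
    nlinarith [hQd]
  unfold rndsM
  rw [hQe]
  field_simp
  ring

lemma rndsM_contOn (Λ Q : ℝ) : ContinuousOn (rndsM Λ Q) (Set.Ioi 0) := by
  intro x hx
  have hx0 : (x:ℝ) ≠ 0 := ne_of_gt hx
  apply ContinuousAt.continuousWithinAt
  unfold rndsM
  have h1 : ContinuousAt (fun r : ℝ => Q^2/(2*r)) x :=
    ContinuousAt.div continuousAt_const (continuousAt_const.mul continuousAt_id)
      (mul_ne_zero two_ne_zero hx0)
  have h2 : ContinuousAt (fun r : ℝ => r/2) x := continuousAt_id.div_const 2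
  have h3 : ContinuousAt (fun r : ℝ => Λ/6*r^3) x :=
    continuousAt_const.mul (continuousAt_pow (n := 3) x)
  exact (h1.add h2).sub h3

open Polynomial in
lemma rnds_card_le (Λ m Q : ℝ) (hΛ : 0 < Λ) (s : Finset ℝ)
    (h : ∀ x ∈ s, Λ/3*x^4 - x^2 + 2*m*x - Q^2 = 0) : s.card ≤ 4 := by
  set P : ℝ[X] := C (Λ/3) * X^4 - X^2 + C (2*m) * X - C (Q^2) with hP
  have hdeg : P.natDegree = 4 := by
    unfold P
    compute_degree!
    positivity
  have hP0 : P ≠ 0 := fun h0 => by simp [h0] at hdeg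
  have hsub : s ⊆ P.roots.toFinset := by
    intro x hx
    rw [Multiset.mem_toFinset, mem_roots hP0]
    have := h x hx
    simp only [IsRoot, hP, eval_sub, eval_add, eval_mul, eval_pow, eval_C, eval_X]
    linarith [this]
  calc s.card ≤ P.roots.toFinset.card := Finset.card_le_card hsub
    _ ≤ Multiset.card P.roots := Multiset.toFinset_card_le _
    _ ≤ 4 := by rw [← hdeg]; exact P.card_roots'

set_option maxHeartbeats 2000000 in
lemma rnds_bwd (Λ m Q : ℝ) (hΛ : 0 < Λ) (hQ : 0 < Q ^ 2) (hQ2 : Q ^ 2 < 1 / (4 * Λ))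
    (hm1 : (2 + Real.sqrt (1 - 4 * Λ * Q ^ 2)) / (3 * Real.sqrt (2 * Λ)) *
          Real.sqrt (1 - Real.sqrt (1 - 4 * Λ * Q ^ 2)) < m)
    (hm2 : m < (2 - Real.sqrt (1 - 4 * Λ * Q ^ 2)) / (3 * Real.sqrt (2 * Λ)) *
          Real.sqrt (1 + Real.sqrt (1 - 4 * Λ * Q ^ 2))) :
    ({r : ℝ | 0 < r ∧ Λ / 3 * r ^ 4 - r ^ 2 + 2 * m * r - Q ^ 2 = 0}.encard = 3) ∧
    ({r : ℝ | r < 0 ∧ Λ / 3 * r ^ 4 - r ^ 2 + 2 * m * r - Q ^ 2 = 0}.encard = 1) := by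
  have hD : 0 < 1 - 4*Λ*Q^2 := by
    rw [lt_div_iff₀ (by positivity)] at hQ2; linarith
  set d := Real.sqrt (1 - 4*Λ*Q^2) with hd_def
  have hdsq : d^2 = 1 - 4*Λ*Q^2 := Real.sq_sqrt hD.le
  have hd0 : 0 < d := Real.sqrt_pos.2 hD
  have hd1 : d < 1 := by
    have h4 : 0 < 4*Λ*Q^2 := by positivity
    nlinarith
  set u := Real.sqrt (2*Λ) with hu_def
  have hu : u^2 = 2*Λ := Real.sq_sqrt (by positivity)
  have hu0 : 0 < u := Real.sqrt_pos.2 (by positivity)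
  set em := Real.sqrt (1-d) with hem_def
  set ep := Real.sqrt (1+d) with hep_def
  have hem : em^2 = 1 - d := Real.sq_sqrt (by linarith)
  have hep : ep^2 = 1 + d := Real.sq_sqrt (by linarith)
  have hem0 : 0 < em := Real.sqrt_pos.2 (by linarith)
  have hep0 : 0 < ep := Real.sqrt_pos.2 (by linarith)
  have hee : em < ep := Real.sqrt_lt_sqrt (by linarith) (by linarith)
  set rm := em/u with hrm_def
  set rp := ep/u with hrp_def
  have hrm0 : 0 < rm := div_pos hem0 hu0
  have hrp0 : 0 < rp := div_pos hep0 hu0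
  have hrr : rm < rp := by rw [hrm_def, hrp_def]; gcongr
  have hrmsq : rm^2 = (1-d)/(2*Λ) := by rw [hrm_def, div_pow, hem, hu]
  have hrpsq : rp^2 = (1+d)/(2*Λ) := by rw [hrp_def, div_pow, hep, hu]
  have hrootm : Λ*((1-d)/(2*Λ))^2 - (1-d)/(2*Λ) + Q^2 = 0 := by
    field_simp; linear_combination hdsq
  have hrootp : Λ*((1+d)/(2*Λ))^2 - (1+d)/(2*Λ) + Q^2 = 0 := by
    field_simp; linear_combination hdsq
  have h2xm : 2*Λ*((1-d)/(2*Λ)) < 1 := by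
    rw [mul_div_cancel₀ _ (by positivity : (2*Λ) ≠ 0)]; linarith
  have h2xp : 1 < 2*Λ*((1+d)/(2*Λ)) := by
    rw [mul_div_cancel₀ _ (by positivity : (2*Λ) ≠ 0)]; linarith
  have hsum : Λ*((1-d)/(2*Λ) + (1+d)/(2*Λ)) = 1 := by field_simp; ring
  have hprod : Λ*((1-d)/(2*Λ) * ((1+d)/(2*Λ))) = Q^2 := by
    field_simp; linear_combination (-1)*hdsq
  clear_value d u em ep rm rp
  have hMm : rndsM Λ Q rm = (2+d)/(3*u)*em := by
    rw [hrm_def]; exact rndsM_val Λ Q d em u hu hu0 hem hem0 (by linarith)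
  have hMp : rndsM Λ Q rp = (2-d)/(3*u)*ep := by
    have h := rndsM_val Λ Q (-d) ep u hu hu0 (by rw [hep]; ring) hep0
      (by linear_combination hdsq)
    rw [hrp_def, h]; ring
  have hm1' : rndsM Λ Q rm < m := by rw [hMm]; exact hm1
  have hm2' : m < rndsM Λ Q rp := by rw [hMp]; exact hm2
  have hm0 : 0 < m := by
    have : 0 < (2+d)/(3*u)*em := mul_pos (div_pos (by linarith) (by positivity)) hem0
    linarith
  -- uniqueness helpers
  have uL : ∀ a b : ℝ, 0 < a → a < b → b ≤ rm → rndsM Λ Q b < rndsM Λ Q a := by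
    intro a b ha hab hb
    refine rndsM_gt_of_F_neg Λ Q a b ha hab ?_
    refine rnds_F_neg_left Λ Q a b ((1-d)/(2*Λ)) hΛ ha hab ?_ hrootm h2xm
    rw [← hrmsq]
    exact pow_le_pow_left₀ (le_of_lt (ha.trans hab)) hb 2
  have uM : ∀ a b : ℝ, rm ≤ a → a < b → b ≤ rp → rndsM Λ Q a < rndsM Λ Q b := by
    intro a b ha hab hb
    have ha0 : 0 < a := lt_of_lt_of_le hrm0 ha
    refine rndsM_lt_of_F_pos Λ Q a b ha0 hab ?_
    refine rnds_F_pos_mid Λ Q a b ((1-d)/(2*Λ)) ((1+d)/(2*Λ)) hΛ ha0 hab ?_ ?_ hsum hprod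
    · rw [← hrmsq]; exact pow_le_pow_left₀ hrm0.le ha 2
    · rw [← hrpsq]; exact pow_le_pow_left₀ (le_of_lt (ha0.trans hab)) hb 2
  have uR : ∀ a b : ℝ, rp ≤ a → a < b → rndsM Λ Q b < rndsM Λ Q a := by
    intro a b ha hab
    have ha0 : 0 < a := lt_of_lt_of_le hrp0 ha
    refine rndsM_gt_of_F_neg Λ Q a b ha0 hab ?_
    refine rnds_F_neg_right Λ Q a b ((1+d)/(2*Λ)) hΛ ha0 hab ?_ hrootp h2xp
    rw [← hrpsq]; exact pow_le_pow_left₀ hrp0.le ha 2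
  -- small root
  have hB0 : 0 < 2*(m + Λ*rm^3/6 + 1) := by
    have : 0 ≤ Λ*rm^3 := mul_nonneg hΛ.le (pow_nonneg hrm0.le 3)
    linarith
  set ε := min (rm/2) (Q^2/(2*(m + Λ*rm^3/6 + 1))) with hε_def
  have hε0 : 0 < ε := lt_min (by linarith) (div_pos hQ hB0)
  have hεrm : ε < rm := lt_of_le_of_lt (min_le_left _ _) (by linarith)
  have h1ε : ε ≤ Q^2/(2*(m + Λ*rm^3/6 + 1)) := min_le_right _ _
  clear_value ε
  have hMε : m < rndsM Λ Q ε := by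
    have h1' : ε*(2*(m + Λ*rm^3/6 + 1)) ≤ Q^2 := (le_div_iff₀ hB0).1 h1ε
    have h2 : (m + Λ*rm^3/6 + 1) ≤ Q^2/(2*ε) := by
      rw [le_div_iff₀ (by linarith : (0:ℝ) < 2*ε)]
      calc (m + Λ*rm^3/6 + 1) * (2*ε) = ε*(2*(m + Λ*rm^3/6 + 1)) := by ring
        _ ≤ Q^2 := h1'
    have h3 : Λ/6*ε^3 ≤ Λ/6*rm^3 :=
      mul_le_mul_of_nonneg_left (pow_le_pow_left₀ hε0.le hεrm.le 3)
        (by linarith : (0:ℝ) ≤ Λ/6)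
    unfold rndsM
    linarith [hε0]
  obtain ⟨x₁, hx₁I, hx₁M⟩ := intermediate_value_Ioo' hεrm.le
    ((rndsM_contOn Λ Q).mono (fun z hz => lt_of_lt_of_le hε0 hz.1))
    (Set.mem_Ioo.2 ⟨hm1', hMε⟩)
  obtain ⟨x₂, hx₂I, hx₂M⟩ := intermediate_value_Ioo hrr.le
    ((rndsM_contOn Λ Q).mono (fun z hz => lt_of_lt_of_le hrm0 hz.1))
    (Set.mem_Ioo.2 ⟨hm1', hm2'⟩)
  -- large root
  have hRs : Real.sqrt (6/Λ) ≤ max (rp+1) (max (Real.sqrt (6/Λ)) (Q^2 + 2*|m| + 1)) :=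
    (le_max_left _ _).trans (le_max_right _ _)
  have hRQ : Q^2 + 2*|m| + 1 ≤ max (rp+1) (max (Real.sqrt (6/Λ)) (Q^2 + 2*|m| + 1)) :=
    (le_max_right _ _).trans (le_max_right _ _)
  set Rt := max (rp+1) (max (Real.sqrt (6/Λ)) (Q^2 + 2*|m| + 1)) with hRt_def
  have hR1 : rp < Rt := lt_of_lt_of_le (by linarith) (le_max_left _ _)
  clear_value Rt
  have hRt1 : 1 ≤ Rt := by linarith [hRQ, abs_nonneg m, hQ]
  have hR0 : 0 < Rt := by linarith
  have hR2 : 6/Λ ≤ Rt^2 := by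
    have h := pow_le_pow_left₀ (Real.sqrt_nonneg (6/Λ)) hRs 2
    rwa [Real.sq_sqrt (by positivity)] at h
  have hR6 : 6 ≤ Λ*Rt^2 := by
    rw [div_le_iff₀ hΛ] at hR2; linarith [hR2]
  have hMR : rndsM Λ Q Rt < m := by
    have h1 : Rt ≤ Λ/6*Rt^3 := by
      calc Rt = Rt/6*6 := by ring
        _ ≤ Rt/6*(Λ*Rt^2) := mul_le_mul_of_nonneg_left hR6 (by linarith)
        _ = Λ/6*Rt^3 := by ring
    have h2 : Q^2/(2*Rt) ≤ Q^2/2 := by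
      rw [div_le_div_iff₀ (by linarith) (by norm_num)]
      exact mul_le_mul_of_nonneg_left (by linarith) hQ.le
    have h3 : -|m| ≤ m := neg_abs_le m
    unfold rndsM
    linarith [h1, h2, h3, hRQ]
  obtain ⟨x₃, hx₃I, hx₃M⟩ := intermediate_value_Ioo' hR1.le
    ((rndsM_contOn Λ Q).mono (fun z hz => lt_of_lt_of_le hrp0 hz.1))
    (Set.mem_Ioo.2 ⟨hMR, hm2'⟩)
  have hx₁0 : 0 < x₁ := hε0.trans hx₁I.1
  have hx₂0 : 0 < x₂ := hrm0.trans hx₂I.1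
  have hx₃0 : 0 < x₃ := hrp0.trans hx₃I.1
  have hord1 : x₁ < x₂ := hx₁I.2.trans hx₂I.1
  have hord2 : x₂ < x₃ := hx₂I.2.trans hx₃I.1
  have hSet : {r : ℝ | 0 < r ∧ Λ / 3 * r ^ 4 - r ^ 2 + 2 * m * r - Q ^ 2 = 0}
      = {x₁, x₂, x₃} := by
    ext r
    simp only [Set.mem_setOf_eq, Set.mem_insert_iff, Set.mem_singleton_iff]
    constructor
    · rintro ⟨hr0, hr⟩
      have hrM : rndsM Λ Q r = m := (rnds_root_iff Λ m Q r hr0).1 hr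
      rcases lt_trichotomy r rm with h|h|h
      · left
        by_contra hne
        rcases lt_or_gt_of_ne hne with hlt|hgt
        · exact absurd (hrM.trans hx₁M.symm) (ne_of_gt (uL r x₁ hr0 hlt hx₁I.2.le))
        · exact absurd (hx₁M.trans hrM.symm) (ne_of_gt (uL x₁ r hx₁0 hgt h.le))
      · rw [h] at hrM; linarith [hm1', hrM.ge]
      · rcases lt_trichotomy r rp with h'|h'|h'
        · right; left
          by_contra hne
          rcases lt_or_gt_of_ne hne with hlt|hgt
          · exact absurd (hrM.trans hx₂M.symm) (ne_of_lt (uM r x₂ h.le hlt hx₂I.2.le))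
          · exact absurd (hx₂M.trans hrM.symm) (ne_of_lt (uM x₂ r hx₂I.1.le hgt h'.le))
        · rw [h'] at hrM; linarith [hm2', hrM.le]
        · right; right
          by_contra hne
          rcases lt_or_gt_of_ne hne with hlt|hgt
          · exact absurd (hrM.trans hx₃M.symm) (ne_of_gt (uR r x₃ h'.le hlt))
          · exact absurd (hx₃M.trans hrM.symm) (ne_of_gt (uR x₃ r hx₃I.1.le hgt))
    · rintro (rfl|rfl|rfl)
      · exact ⟨hx₁0, (rnds_root_iff Λ m Q _ hx₁0).2 hx₁M⟩
      · exact ⟨hx₂0, (rnds_root_iff Λ m Q _ hx₂0).2 hx₂M⟩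
      · exact ⟨hx₃0, (rnds_root_iff Λ m Q _ hx₃0).2 hx₃M⟩
  constructor
  · rw [hSet]
    exact Set.encard_eq_three.2 ⟨x₁, x₂, x₃, ne_of_lt hord1, ne_of_lt (hord1.trans hord2),
      ne_of_lt hord2, rfl⟩
  · -- negative root
    have hRs' : Real.sqrt (6/Λ) ≤ max (Real.sqrt (6/Λ)) (2*m + Q^2 + 1) := le_max_left _ _
    have hRm' : 2*m + Q^2 + 1 ≤ max (Real.sqrt (6/Λ)) (2*m + Q^2 + 1) := le_max_right _ _
    set R' := max (Real.sqrt (6/Λ)) (2*m + Q^2 + 1) with hR'_def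
    clear_value R'
    have hR'0 : 0 < R' := lt_of_lt_of_le (by positivity) hRm'
    have hR'1 : 1 ≤ R' := le_trans (by linarith [hQ.le, hm0]) hRm'
    have hR'2 : 6/Λ ≤ R'^2 := by
      have h := pow_le_pow_left₀ (Real.sqrt_nonneg (6/Λ)) hRs' 2
      rwa [Real.sq_sqrt (by positivity)] at h
    have hpR' : 0 < Λ / 3 * (-R') ^ 4 - (-R') ^ 2 + 2 * m * (-R') - Q ^ 2 := by
      have hR'6 : 6 ≤ Λ*R'^2 := by rw [div_le_iff₀ hΛ] at hR'2; linarith [hR'2]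
      have h1 : 2*R'^2 ≤ Λ/3*R'^4 := by
        calc 2*R'^2 = 6*(R'^2/3) := by ring
          _ ≤ (Λ*R'^2)*(R'^2/3) := mul_le_mul_of_nonneg_right hR'6 (by positivity)
          _ = Λ/3*R'^4 := by ring
      have h2' : 2*m*R' + (Q^2+1)*R' ≤ R'^2 := by
        calc 2*m*R' + (Q^2+1)*R' = R'*(2*m+Q^2+1) := by ring
          _ ≤ R'*R' := mul_le_mul_of_nonneg_left hRm' hR'0.le
          _ = R'^2 := by ring
      have h3 : Q^2 + 1 ≤ (Q^2+1)*R' := le_mul_of_one_le_right (by positivity) hR'1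
      have hrw : Λ / 3 * (-R') ^ 4 - (-R') ^ 2 + 2 * m * (-R') - Q ^ 2
          = Λ/3*R'^4 - R'^2 - 2*m*R' - Q^2 := by ring
      rw [hrw]
      linarith [h1, h2', h3]
    have hpc : Continuous fun r : ℝ => Λ / 3 * r ^ 4 - r ^ 2 + 2 * m * r - Q ^ 2 := by
      fun_prop
    have hp0 : (fun r : ℝ => Λ / 3 * r ^ 4 - r ^ 2 + 2 * m * r - Q ^ 2) 0 < 0 := by
      norm_num; positivity
    obtain ⟨y, hyI, hyM⟩ := intermediate_value_Ioo' (show -R' ≤ 0 by linarith)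
      hpc.continuousOn (Set.mem_Ioo.2 ⟨hp0, hpR'⟩)
    have hy0 : y < 0 := hyI.2
    have hSet2 : {r : ℝ | r < 0 ∧ Λ / 3 * r ^ 4 - r ^ 2 + 2 * m * r - Q ^ 2 = 0} = {y} := by
      ext r
      simp only [Set.mem_setOf_eq, Set.mem_singleton_iff]
      constructor
      · rintro ⟨hr0, hr⟩
        by_contra hne
        have hcard : ({r, y, x₁, x₂, x₃} : Finset ℝ).card = 5 := by
          have n1 : r ∉ ({y, x₁, x₂, x₃} : Finset ℝ) := by
            simp only [Finset.mem_insert, Finset.mem_singleton]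
            push_neg
            exact ⟨hne, by linarith, by linarith, by linarith⟩
          have n2 : y ∉ ({x₁, x₂, x₃} : Finset ℝ) := by
            simp only [Finset.mem_insert, Finset.mem_singleton]
            push_neg
            exact ⟨by linarith, by linarith, by linarith⟩
          have n3 : x₁ ∉ ({x₂, x₃} : Finset ℝ) := by
            simp only [Finset.mem_insert, Finset.mem_singleton]
            push_neg
            exact ⟨by linarith, by linarith⟩
          have n4 : x₂ ∉ ({x₃} : Finset ℝ) := by
            simp only [Finset.mem_singleton]
            linarith
          rw [Finset.card_insert_of_notMem n1, Finset.card_insert_of_notMem n2,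
            Finset.card_insert_of_notMem n3, Finset.card_insert_of_notMem n4,
            Finset.card_singleton]
        have hle := rnds_card_le Λ m Q hΛ {r, y, x₁, x₂, x₃} (by
          intro x hx
          simp only [Finset.mem_insert, Finset.mem_singleton] at hx
          rcases hx with rfl|rfl|rfl|rfl|rfl
          · exact hr
          · exact hyM
          · exact (rnds_root_iff Λ m Q _ hx₁0).2 hx₁M
          · exact (rnds_root_iff Λ m Q _ hx₂0).2 hx₂M
          · exact (rnds_root_iff Λ m Q _ hx₃0).2 hx₃M)
        rw [hcard] at hle
        norm_num at hle
      · rintro rfl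
        exact ⟨hy0, hyM⟩
    rw [hSet2]
    exact Set.encard_singleton y

set_option maxHeartbeats 2000000 in
lemma rnds_fwd (Λ m Q : ℝ) (hΛ : 0 < Λ)
    (h3 : ({r : ℝ | 0 < r ∧ Λ / 3 * r ^ 4 - r ^ 2 + 2 * m * r - Q ^ 2 = 0}.encard = 3)) :
    0 < Q ^ 2 ∧ Q ^ 2 < 1 / (4 * Λ) ∧
      (2 + Real.sqrt (1 - 4 * Λ * Q ^ 2)) / (3 * Real.sqrt (2 * Λ)) *
          Real.sqrt (1 - Real.sqrt (1 - 4 * Λ * Q ^ 2)) < m ∧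
      m < (2 - Real.sqrt (1 - 4 * Λ * Q ^ 2)) / (3 * Real.sqrt (2 * Λ)) *
          Real.sqrt (1 + Real.sqrt (1 - 4 * Λ * Q ^ 2)) := by
  obtain ⟨x₁, x₂, x₃, h12, h13, h23, hS⟩ := Set.encard_eq_three.1 h3
  have hm₁ : x₁ ∈ {r : ℝ | 0 < r ∧ Λ / 3 * r ^ 4 - r ^ 2 + 2 * m * r - Q ^ 2 = 0} := by
    rw [hS]; left; rfl
  have hm₂ : x₂ ∈ {r : ℝ | 0 < r ∧ Λ / 3 * r ^ 4 - r ^ 2 + 2 * m * r - Q ^ 2 = 0} := by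
    rw [hS]; right; left; rfl
  have hm₃ : x₃ ∈ {r : ℝ | 0 < r ∧ Λ / 3 * r ^ 4 - r ^ 2 + 2 * m * r - Q ^ 2 = 0} := by
    rw [hS]; right; right; rfl
  obtain ⟨hx₁0, hr₁⟩ := hm₁
  obtain ⟨hx₂0, hr₂⟩ := hm₂
  obtain ⟨hx₃0, hr₃⟩ := hm₃
  have hM₁ : rndsM Λ Q x₁ = m := (rnds_root_iff Λ m Q x₁ hx₁0).1 hr₁
  have hM₂ : rndsM Λ Q x₂ = m := (rnds_root_iff Λ m Q x₂ hx₂0).1 hr₂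
  have hM₃ : rndsM Λ Q x₃ = m := (rnds_root_iff Λ m Q x₃ hx₃0).1 hr₃
  -- Step 1 : 0 < Q^2
  have hQ : 0 < Q^2 := by
    rcases (sq_nonneg Q).eq_or_lt with h0|h0
    · exfalso
      have e1 : x₁*(Λ/3*x₁^3 - x₁ + 2*m) = 0 := by linear_combination hr₁ - h0
      have e2 : x₂*(Λ/3*x₂^3 - x₂ + 2*m) = 0 := by linear_combination hr₂ - h0
      have e3 : x₃*(Λ/3*x₃^3 - x₃ + 2*m) = 0 := by linear_combination hr₃ - h0
      have c1 : Λ/3*x₁^3 - x₁ + 2*m = 0 :=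
        (mul_eq_zero.1 e1).resolve_left hx₁0.ne'
      have c2 : Λ/3*x₂^3 - x₂ + 2*m = 0 :=
        (mul_eq_zero.1 e2).resolve_left hx₂0.ne'
      have c3 : Λ/3*x₃^3 - x₃ + 2*m = 0 :=
        (mul_eq_zero.1 e3).resolve_left hx₃0.ne'
      have r12 : (x₁ - x₂)*(Λ/3*(x₁^2+x₁*x₂+x₂^2) - 1) = 0 := by
        linear_combination c1 - c2
      have r13 : (x₁ - x₃)*(Λ/3*(x₁^2+x₁*x₃+x₃^2) - 1) = 0 := by
        linear_combination c1 - c3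
      have s12 : Λ/3*(x₁^2+x₁*x₂+x₂^2) - 1 = 0 :=
        (mul_eq_zero.1 r12).resolve_left (sub_ne_zero.2 h12)
      have s13 : Λ/3*(x₁^2+x₁*x₃+x₃^2) - 1 = 0 :=
        (mul_eq_zero.1 r13).resolve_left (sub_ne_zero.2 h13)
      have fin : Λ*((x₂ - x₃)*(x₁+x₂+x₃)) = 0 := by
        linear_combination 3*s12 - 3*s13
      rcases mul_eq_zero.1 fin with h|h
      · exact hΛ.ne' h
      · rcases mul_eq_zero.1 h with h'|h'
        · exact h23 (sub_eq_zero.1 h')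
        · linarith
    · exact h0
  -- Step 2 : Q^2 < 1/(4Λ)
  have hQ2 : Q^2 < 1/(4*Λ) := by
    by_contra hc
    push_neg at hc
    have hD : 1 ≤ 4*Λ*Q^2 := by
      rw [div_le_iff₀ (by positivity)] at hc; linarith
    have key : ∀ a b : ℝ, 0 < a → a < b → rndsM Λ Q a = m → rndsM Λ Q b = m → False := by
      intro a b ha hab hMa hMb
      have := rndsM_gt_of_F_neg Λ Q a b ha hab (rnds_F_neg_all Λ Q a b hΛ ha hab hD)
      rw [hMa, hMb] at this
      exact lt_irrefl m this
    rcases lt_or_gt_of_ne h12 with h|h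
    · exact key x₁ x₂ hx₁0 h hM₁ hM₂
    · exact key x₂ x₁ hx₂0 h hM₂ hM₁
  -- setup
  have hD : 0 < 1 - 4*Λ*Q^2 := by
    rw [lt_div_iff₀ (by positivity)] at hQ2; linarith
  set d := Real.sqrt (1 - 4*Λ*Q^2) with hd_def
  have hdsq : d^2 = 1 - 4*Λ*Q^2 := Real.sq_sqrt hD.le
  have hd0 : 0 < d := Real.sqrt_pos.2 hD
  have hd1 : d < 1 := by
    have h4 : 0 < 4*Λ*Q^2 := by positivity
    nlinarith
  set u := Real.sqrt (2*Λ) with hu_def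
  have hu : u^2 = 2*Λ := Real.sq_sqrt (by positivity)
  have hu0 : 0 < u := Real.sqrt_pos.2 (by positivity)
  set em := Real.sqrt (1-d) with hem_def
  set ep := Real.sqrt (1+d) with hep_def
  have hem : em^2 = 1 - d := Real.sq_sqrt (by linarith)
  have hep : ep^2 = 1 + d := Real.sq_sqrt (by linarith)
  have hem0 : 0 < em := Real.sqrt_pos.2 (by linarith)
  have hep0 : 0 < ep := Real.sqrt_pos.2 (by linarith)
  have hee : em < ep := Real.sqrt_lt_sqrt (by linarith) (by linarith)
  set rm := em/u with hrm_def
  set rp := ep/u with hrp_def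
  have hrm0 : 0 < rm := div_pos hem0 hu0
  have hrp0 : 0 < rp := div_pos hep0 hu0
  have hrr : rm < rp := by rw [hrm_def, hrp_def]; gcongr
  have hrmsq : rm^2 = (1-d)/(2*Λ) := by rw [hrm_def, div_pow, hem, hu]
  have hrpsq : rp^2 = (1+d)/(2*Λ) := by rw [hrp_def, div_pow, hep, hu]
  have hrootm : Λ*((1-d)/(2*Λ))^2 - (1-d)/(2*Λ) + Q^2 = 0 := by
    field_simp; linear_combination hdsq
  have hrootp : Λ*((1+d)/(2*Λ))^2 - (1+d)/(2*Λ) + Q^2 = 0 := by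
    field_simp; linear_combination hdsq
  have h2xm : 2*Λ*((1-d)/(2*Λ)) < 1 := by
    rw [mul_div_cancel₀ _ (by positivity : (2*Λ) ≠ 0)]; linarith
  have h2xp : 1 < 2*Λ*((1+d)/(2*Λ)) := by
    rw [mul_div_cancel₀ _ (by positivity : (2*Λ) ≠ 0)]; linarith
  have hsum : Λ*((1-d)/(2*Λ) + (1+d)/(2*Λ)) = 1 := by field_simp; ring
  have hprod : Λ*((1-d)/(2*Λ) * ((1+d)/(2*Λ))) = Q^2 := by
    field_simp; linear_combination (-1)*hdsq
  clear_value d u em ep rm rp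
  have hMm : rndsM Λ Q rm = (2+d)/(3*u)*em := by
    rw [hrm_def]; exact rndsM_val Λ Q d em u hu hu0 hem hem0 (by linarith)
  have hMp : rndsM Λ Q rp = (2-d)/(3*u)*ep := by
    have h := rndsM_val Λ Q (-d) ep u hu hu0 (by rw [hep]; ring) hep0
      (by linear_combination hdsq)
    rw [hrp_def, h]; ring
  have uL : ∀ a b : ℝ, 0 < a → a < b → b ≤ rm → rndsM Λ Q b < rndsM Λ Q a := by
    intro a b ha hab hb
    refine rndsM_gt_of_F_neg Λ Q a b ha hab ?_
    refine rnds_F_neg_left Λ Q a b ((1-d)/(2*Λ)) hΛ ha hab ?_ hrootm h2xm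
    rw [← hrmsq]
    exact pow_le_pow_left₀ (le_of_lt (ha.trans hab)) hb 2
  have uM : ∀ a b : ℝ, rm ≤ a → a < b → b ≤ rp → rndsM Λ Q a < rndsM Λ Q b := by
    intro a b ha hab hb
    have ha0 : 0 < a := lt_of_lt_of_le hrm0 ha
    refine rndsM_lt_of_F_pos Λ Q a b ha0 hab ?_
    refine rnds_F_pos_mid Λ Q a b ((1-d)/(2*Λ)) ((1+d)/(2*Λ)) hΛ ha0 hab ?_ ?_ hsum hprod
    · rw [← hrmsq]; exact pow_le_pow_left₀ hrm0.le ha 2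
    · rw [← hrpsq]; exact pow_le_pow_left₀ (le_of_lt (ha0.trans hab)) hb 2
  have uR : ∀ a b : ℝ, rp ≤ a → a < b → rndsM Λ Q b < rndsM Λ Q a := by
    intro a b ha hab
    have ha0 : 0 < a := lt_of_lt_of_le hrp0 ha
    refine rndsM_gt_of_F_neg Λ Q a b ha0 hab ?_
    refine rnds_F_neg_right Λ Q a b ((1+d)/(2*Λ)) hΛ ha0 hab ?_ hrootp h2xp
    rw [← hrpsq]; exact pow_le_pow_left₀ hrp0.le ha 2
  -- Step 3 : lower bound on m
  have hmlow : (2+d)/(3*u)*em < m := by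
    by_contra hc
    push_neg at hc
    rw [← hMm] at hc
    have hclass : ∀ r : ℝ, 0 < r → rndsM Λ Q r = m → r = rm ∨ rp < r := by
      intro r hr0 hrM
      rcases lt_trichotomy r rm with h|h|h
      · exfalso
        have := uL r rm hr0 h le_rfl
        rw [hrM] at this
        exact absurd (this.trans_le hc) (lt_irrefl _)
      · exact Or.inl h
      · rcases le_or_gt r rp with h'|h'
        · exfalso
          have := uM rm r le_rfl h h'
          rw [hrM] at this
          exact absurd (this.trans_le hc) (lt_irrefl _)
        · exact Or.inr h'
    have key : ∀ a b : ℝ, rp < a → rp < b → a ≠ b →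
        rndsM Λ Q a = m → rndsM Λ Q b = m → False := by
      intro a b ha hb hab hMa hMb
      rcases lt_or_gt_of_ne hab with h|h
      · have := uR a b ha.le h; rw [hMa, hMb] at this; exact lt_irrefl m this
      · have := uR b a hb.le h; rw [hMa, hMb] at this; exact lt_irrefl m this
    rcases hclass x₁ hx₁0 hM₁ with e1|g1 <;>
      rcases hclass x₂ hx₂0 hM₂ with e2|g2 <;>
      rcases hclass x₃ hx₃0 hM₃ with e3|g3
    · exact h12 (e1.trans e2.symm)
    · exact h12 (e1.trans e2.symm)
    · exact h13 (e1.trans e3.symm)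
    · exact key x₂ x₃ g2 g3 h23 hM₂ hM₃
    · exact h23 (e2.trans e3.symm)
    · exact key x₁ x₃ g1 g3 h13 hM₁ hM₃
    · exact key x₁ x₂ g1 g2 h12 hM₁ hM₂
    · exact key x₁ x₂ g1 g2 h12 hM₁ hM₂
  -- Step 4 : upper bound on m
  have hmup : m < (2-d)/(3*u)*ep := by
    by_contra hc
    push_neg at hc
    rw [← hMp] at hc
    have hclass : ∀ r : ℝ, 0 < r → rndsM Λ Q r = m → r < rm ∨ r = rp := by
      intro r hr0 hrM
      rcases lt_trichotomy r rm with h|h|h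
      · exact Or.inl h
      · exfalso
        have := uM rm rp le_rfl hrr le_rfl
        rw [← h, hrM] at this
        exact absurd (hc.trans_lt this) (lt_irrefl _)
      · rcases lt_trichotomy r rp with h'|h'|h'
        · exfalso
          have := uM r rp h.le h' le_rfl
          rw [hrM] at this
          exact absurd (hc.trans_lt this) (lt_irrefl _)
        · exact Or.inr h'
        · exfalso
          have := uR rp r le_rfl h'
          rw [hrM] at this
          exact absurd (hc.trans_lt this) (lt_irrefl _)
    have key : ∀ a b : ℝ, a < rm → b < rm → a ≠ b → 0 < a → 0 < b →
        rndsM Λ Q a = m → rndsM Λ Q b = m → False := by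
      intro a b ha hb hab ha0 hb0 hMa hMb
      rcases lt_or_gt_of_ne hab with h|h
      · have := uL a b ha0 h hb.le; rw [hMa, hMb] at this; exact lt_irrefl m this
      · have := uL b a hb0 h ha.le; rw [hMa, hMb] at this; exact lt_irrefl m this
    rcases hclass x₁ hx₁0 hM₁ with g1|e1 <;>
      rcases hclass x₂ hx₂0 hM₂ with g2|e2 <;>
      rcases hclass x₃ hx₃0 hM₃ with g3|e3
    · exact key x₁ x₂ g1 g2 h12 hx₁0 hx₂0 hM₁ hM₂
    · exact key x₁ x₂ g1 g2 h12 hx₁0 hx₂0 hM₁ hM₂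
    · exact key x₁ x₃ g1 g3 h13 hx₁0 hx₃0 hM₁ hM₃
    · exact h23 (e2.trans e3.symm)
    · exact key x₂ x₃ g2 g3 h23 hx₂0 hx₃0 hM₂ hM₃
    · exact h13 (e1.trans e3.symm)
    · exact h12 (e1.trans e2.symm)
    · exact h12 (e1.trans e2.symm)
  exact ⟨hQ, hQ2, hmlow, hmup⟩


/-- The Reissner–Nordström–de Sitter horizon quartic
`p(r) = (Λ/3) r⁴ − r² + 2 m r − Q²` has exactly three distinct positive real
roots and exactly one negative real root if and only if `0 < Q² < 1/(4Λ)` and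
the mass `m` lies in the explicitly given interval. -/
theorem rnds_three_positive_roots_iff (Λ m Q : ℝ) (hΛ : 0 < Λ) :
    (({r : ℝ | 0 < r ∧ Λ / 3 * r ^ 4 - r ^ 2 + 2 * m * r - Q ^ 2 = 0}.encard = 3) ∧
      ({r : ℝ | r < 0 ∧ Λ / 3 * r ^ 4 - r ^ 2 + 2 * m * r - Q ^ 2 = 0}.encard = 1)) ↔
    (0 < Q ^ 2 ∧ Q ^ 2 < 1 / (4 * Λ) ∧
      (2 + Real.sqrt (1 - 4 * Λ * Q ^ 2)) / (3 * Real.sqrt (2 * Λ)) *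
          Real.sqrt (1 - Real.sqrt (1 - 4 * Λ * Q ^ 2)) < m ∧
      m < (2 - Real.sqrt (1 - 4 * Λ * Q ^ 2)) / (3 * Real.sqrt (2 * Λ)) *
          Real.sqrt (1 + Real.sqrt (1 - 4 * Λ * Q ^ 2))) := by
  constructor
  · rintro ⟨h3, -⟩
    exact rnds_fwd Λ m Q hΛ h3
  · rintro ⟨hQ, hQ2, hm1, hm2⟩
    exact rnds_bwd Λ m Q hΛ hQ hQ2 hm1 hm2
end

section
/- Let Λ > 0, Q ∈ ℝ, let I ⊆ ℝ be an open interval, and let u : I → ℝ be twice differentiable with u(s) > 0 for all s ∈ I, satisfying u''(s) = (1 − u'(s)²)/(2u(s)) − (Λ u(s)⁴ + Q²)/(2 u(s)³) on I. If u attains a local minimum at some s₀ ∈ I, then Λ u(s₀)⁴ + Q² ≤ u(s₀)²; consequently u(s₀)² ≤ 1/Λ and Q² ≤ 1/(4Λ). In particular, for Λ = 1 the minimal slice has area 4πu(s₀)² ≤ 4π < 8π. -/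
open Set Filter Topology

/-- Second derivative test (forward direction): at a local minimum the second
derivative is nonnegative. -/
lemma second_deriv_nonneg_of_isLocalMin {u : ℝ → ℝ} {a b s₀ : ℝ}
    (hdiff : ∀ s ∈ Set.Ioo a b, DifferentiableAt ℝ u s)
    (hdiff' : DifferentiableAt ℝ (deriv u) s₀)
    (hs₀ : s₀ ∈ Set.Ioo a b) (hmin : IsLocalMin u s₀) :
    0 ≤ deriv (deriv u) s₀ := by
  by_contra hneg
  push_neg at hneg
  have h0 : deriv u s₀ = 0 := hmin.deriv_eq_zero
  have hd : HasDerivAt (deriv u) (deriv (deriv u) s₀) s₀ := hdiff'.hasDerivAt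
  have hslope := hasDerivAt_iff_tendsto_slope.mp hd
  -- eventually in 𝓝[≠] s₀, slope < 0
  have h1 : ∀ᶠ s in 𝓝[≠] s₀, slope (deriv u) s₀ s < 0 :=
    hslope.eventually_lt_const hneg
  have h2 : ∀ᶠ s in 𝓝[>] s₀, slope (deriv u) s₀ s < 0 :=
    h1.filter_mono (nhdsWithin_mono _ (fun x hx => ne_of_gt hx))
  have h3 : ∀ᶠ s in 𝓝[>] s₀, deriv u s < 0 := by
    refine h2.mp (eventually_mem_nhdsWithin.mono fun s hs hlt => ?_)
    have hs' : s₀ < s := hs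
    have : slope (deriv u) s₀ s = (deriv u s - deriv u s₀) / (s - s₀) :=
      slope_def_field _ _ _
    rw [this, h0, sub_zero] at hlt
    have := mul_neg_of_neg_of_pos hlt (sub_pos.mpr hs')
    rw [div_mul_cancel₀ _ (ne_of_gt (sub_pos.mpr hs'))] at this
    exact this
  have h4 : ∀ᶠ s in 𝓝[>] s₀, u s₀ ≤ u s :=
    nhdsWithin_le_nhds hmin
  have h5 : ∀ᶠ s in 𝓝[>] s₀, s ∈ Set.Ioo a b :=
    nhdsWithin_le_nhds (isOpen_Ioo.mem_nhds hs₀)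
  obtain ⟨t, hts, htsub⟩ := mem_nhdsGT_iff_exists_Ioo_subset.mp
    ((h3.and (h4.and h5)) : _ ∈ 𝓝[>] s₀)
  -- pick s ∈ Ioo s₀ t
  obtain ⟨s, hs⟩ := exists_between (Set.mem_Ioi.mp hts)
  have hsmem := htsub ⟨hs.1, hs.2⟩
  have hsab : s ∈ Set.Ioo a b := hsmem.2.2
  have hIcc : Set.Icc s₀ s ⊆ Set.Ioo a b := by
    intro x hx
    exact ⟨lt_of_lt_of_le hs₀.1 hx.1, lt_of_le_of_lt hx.2 hsab.2⟩
  have hcont : ContinuousOn u (Set.Icc s₀ s) :=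
    fun x hx => ((hdiff x (hIcc hx)).continuousAt).continuousWithinAt
  have hdo : DifferentiableOn ℝ u (Set.Ioo s₀ s) := fun x hx =>
    (hdiff x (hIcc ⟨le_of_lt hx.1, le_of_lt hx.2⟩)).differentiableWithinAt
  obtain ⟨c, hc, hceq⟩ := exists_deriv_eq_slope u hs.1 hcont hdo
  have hcneg : deriv u c < 0 := (htsub ⟨hc.1, lt_trans hc.2 hs.2⟩).1
  have hslopepos : 0 ≤ (u s - u s₀) / (s - s₀) :=
    div_nonneg (sub_nonneg.mpr hsmem.2.1) (sub_nonneg.mpr (le_of_lt hs.1))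
  rw [hceq] at hcneg
  linarith

/-- At a local minimum `s₀` of a positive solution of
`u'' = (1 − u'²)/(2u) − (Λu⁴ + Q²)/(2u³)` one has `Λu(s₀)⁴ + Q² ≤ u(s₀)²`;
hence `u(s₀)² ≤ 1/Λ` and `Q² ≤ 1/(4Λ)`. In particular, for `Λ = 1` the
minimal slice has area `4πu(s₀)² ≤ 4π < 8π`. -/
theorem rnds_minimal_slice_area_bound (Λ Q a b : ℝ) (hΛ : 0 < Λ) (u : ℝ → ℝ)
    (hdiff : ∀ s ∈ Set.Ioo a b, DifferentiableAt ℝ u s)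
    (hdiff' : ∀ s ∈ Set.Ioo a b, DifferentiableAt ℝ (deriv u) s)
    (hpos : ∀ s ∈ Set.Ioo a b, 0 < u s)
    (hODE : ∀ s ∈ Set.Ioo a b, deriv (deriv u) s =
      (1 - (deriv u s) ^ 2) / (2 * u s) - (Λ * (u s) ^ 4 + Q ^ 2) / (2 * (u s) ^ 3))
    (s₀ : ℝ) (hs₀ : s₀ ∈ Set.Ioo a b) (hmin : IsLocalMin u s₀) :
    Λ * (u s₀) ^ 4 + Q ^ 2 ≤ (u s₀) ^ 2 ∧ (u s₀) ^ 2 ≤ 1 / Λ ∧ Q ^ 2 ≤ 1 / (4 * Λ) ∧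
      (Λ = 1 → 4 * Real.pi * (u s₀) ^ 2 ≤ 4 * Real.pi ∧
        (4 * Real.pi : ℝ) < 8 * Real.pi) := by
  have hU : 0 < u s₀ := hpos s₀ hs₀
  have h0 : deriv u s₀ = 0 := hmin.deriv_eq_zero
  have h2 : 0 ≤ deriv (deriv u) s₀ :=
    second_deriv_nonneg_of_isLocalMin hdiff (hdiff' s₀ hs₀) hs₀ hmin
  rw [hODE s₀ hs₀, h0] at h2
  set U := u s₀ with hUdef
  have hrw : (1 - 0 ^ 2) / (2 * U) - (Λ * U ^ 4 + Q ^ 2) / (2 * U ^ 3)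
      = (U ^ 2 - (Λ * U ^ 4 + Q ^ 2)) / (2 * U ^ 3) := by
    field_simp; ring
  rw [hrw] at h2
  have hden : (0:ℝ) < 2 * U ^ 3 := by positivity
  have key : Λ * U ^ 4 + Q ^ 2 ≤ U ^ 2 := by
    have := mul_nonneg h2 (le_of_lt hden)
    rw [div_mul_cancel₀ _ (ne_of_gt hden)] at this
    linarith
  have hQ2 : 0 ≤ Q ^ 2 := sq_nonneg Q
  have hU2 : (0:ℝ) < U ^ 2 := by positivity
  have h1Λ : U ^ 2 ≤ 1 / Λ := by
    rw [le_div_iff₀ hΛ]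
    nlinarith
  have hQΛ : Q ^ 2 ≤ 1 / (4 * Λ) := by
    rw [le_div_iff₀ (by positivity : (0:ℝ) < 4 * Λ)]
    nlinarith [sq_nonneg (2 * Λ * U ^ 2 - 1)]
  refine ⟨key, h1Λ, hQΛ, fun hΛ1 => ⟨?_, ?_⟩⟩
  · have : U ^ 2 ≤ 1 := by rw [hΛ1] at h1Λ; simpa using h1Λ
    nlinarith [Real.pi_pos]
  · nlinarith [Real.pi_pos]
end
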